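/- Let G be an n-vertex graph with m edges and let x, y ∈ V(G). Then the number of paths from x to y in G is at most max over positive integers ℓ and positive integers d_1,…,d_ℓ with ∑ d_i ≤ m of ∏ d_i; in particular p_{x,y}(G) ≤ e^{m/e}. -/

import Mathlib

open SimpleGraph Finset

/-- The cycle graph on `ZMod r`. -/
def cycGraph (r : ℕ) : SimpleGraph (ZMod r) := SimpleGraph.fromRel (fun a b => a = b + 1)

/-- The number of injective graph homomorphisms from `H` to `G`
(labelled copies of `H` as a subgraph of `G`). -/
noncomputable def copyCnt {α β : Type*} (H : SimpleGraph α) (G : SimpleGraph β) : ℕ :=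
  Nat.card {f : α → β // Function.Injective f ∧ ∀ a b, H.Adj a b → G.Adj (f a) (f b)}

/-- The number of cycles of length `r` in `G`, counted as subgraphs
(i.e. up to starting vertex and orientation). -/
noncomputable def cycCount {V : Type*} (r : ℕ) (G : SimpleGraph V) : ℕ := copyCnt (cycGraph r) G / (2 * r)

/-- The total number of cycles in `G`. -/
noncomputable def totCycCount {V : Type*} [Fintype V] (G : SimpleGraph V) : ℕ :=
  ∑ r ∈ Finset.Icc 3 (Fintype.card V), cycCount r G

/-- The number of Hamiltonian cycles in `G`. -/
noncomputable def hamCnt {V : Type*} [Fintype V] (G : SimpleGraph V) : ℕ := cycCount (Fintype.card V) G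

/-- `G` contains no subgraph isomorphic to `H`. -/
def Freeof {α β : Type*} (H : SimpleGraph α) (G : SimpleGraph β) : Prop :=
  ¬ ∃ f : α → β, Function.Injective f ∧ ∀ a b, H.Adj a b → G.Adj (f a) (f b)

/-- The number of simple paths between `x` and `y` in `G`. -/
noncomputable def pathCnt {V : Type*} (G : SimpleGraph V) (x y : V) : ℕ :=
  Nat.card {p : G.Walk x y // p.IsPath}

/-- The number of edges of `G`. -/
noncomputable def edgeCnt {V : Type*} (G : SimpleGraph V) : ℕ := Nat.card G.edgeSet

/-! ### Auxiliary definitions and lemmas -/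

/-- The set of products of positive integer sequences with sum at most `m`. -/
def pSet (m : ℕ) : Set ℕ := {P | ∃ (ℓ : ℕ) (d : ℕ → ℕ), (∀ i < ℓ, 0 < d i) ∧
          (∑ i ∈ Finset.range ℓ, d i ≤ m) ∧ P = ∏ i ∈ Finset.range ℓ, d i}

lemma one_mem_pSet (m : ℕ) : 1 ∈ pSet m :=
  ⟨0, fun _ => 1, by simp, by simp, by simp⟩

lemma pSet_bddAbove (m : ℕ) : BddAbove (pSet m) := by
  refine ⟨2 ^ m, ?_⟩
  rintro P ⟨ℓ, d, hpos, hsum, rfl⟩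
  calc ∏ i ∈ Finset.range ℓ, d i ≤ ∏ i ∈ Finset.range ℓ, 2 ^ (d i) :=
        Finset.prod_le_prod' (fun i _ => (Nat.lt_two_pow_self (n := d i)).le)
    _ = 2 ^ (∑ i ∈ Finset.range ℓ, d i) := Finset.prod_pow_eq_pow_sum _ _ _
    _ ≤ 2 ^ m := Nat.pow_le_pow_right (by norm_num) hsum

/-- The real bound on members of `pSet`. -/
lemma pSet_real_bound {m P : ℕ} (hP : P ∈ pSet m) :
    (P : ℝ) ≤ Real.exp (m / Real.exp 1) := by
  obtain ⟨ℓ, d, hpos, hsum, rfl⟩ := hP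
  have key : ∀ n : ℕ, (n : ℝ) ≤ Real.exp (n / Real.exp 1) := by
    intro n
    rcases Nat.eq_zero_or_pos n with rfl | hn
    · simpa using (Real.exp_pos _).le
    · have hn' : (0:ℝ) < n := by exact_mod_cast hn
      have hlog : Real.log n ≤ n / Real.exp 1 := by
        have := Real.add_one_le_exp (Real.log n - 1)
        calc Real.log n = (Real.log n - 1) + 1 := by ring
          _ ≤ Real.exp (Real.log n - 1) := this
          _ = n / Real.exp 1 := by
              rw [Real.exp_sub, Real.exp_log hn']
      calc (n:ℝ) = Real.exp (Real.log n) := (Real.exp_log hn').symm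
        _ ≤ Real.exp (n / Real.exp 1) := Real.exp_le_exp.2 hlog
  push_cast
  calc ∏ i ∈ Finset.range ℓ, (d i : ℝ)
      ≤ ∏ i ∈ Finset.range ℓ, Real.exp (d i / Real.exp 1) :=
        Finset.prod_le_prod (fun i _ => by positivity) (fun i _ => key (d i))
    _ = Real.exp (∑ i ∈ Finset.range ℓ, (d i : ℝ) / Real.exp 1) :=
        (Real.exp_sum _ _).symm
    _ ≤ Real.exp (m / Real.exp 1) := by
        apply Real.exp_le_exp.2
        rw [← Finset.sum_div]
        gcongr
        exact_mod_cast hsum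

lemma sSup_pSet_real_bound (m : ℕ) :
    ((sSup (pSet m) : ℕ) : ℝ) ≤ Real.exp (m / Real.exp 1) :=
  pSet_real_bound (Nat.sSup_mem ⟨1, one_mem_pSet m⟩ (pSet_bddAbove m))

/-- First-step decomposition of a path from `x` to `y ≠ x`: the first edge goes to a
neighbor `z` of `x` and the rest is a path in the graph `G'` of edges avoiding `x`. -/
def firstStep {V : Type*} {G : SimpleGraph V} {x y : V} (hxy : x ≠ y)
    (G' : SimpleGraph V) (hG' : ∀ e ∈ G.edgeSet, x ∉ e → e ∈ G'.edgeSet) :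
    (p : G.Walk x y) → p.IsPath → Σ z : G.neighborSet x, {q : G'.Walk z y // q.IsPath}
  | SimpleGraph.Walk.nil, _ => absurd rfl hxy
  | SimpleGraph.Walk.cons h q, hp =>
      have hq : q.IsPath ∧ x ∉ q.support := (SimpleGraph.Walk.cons_isPath_iff h q).1 hp
      have hedges : ∀ e ∈ q.edges, e ∈ G'.edgeSet := by
        intro e he
        refine hG' e (q.edges_subset_edgeSet he) ?_
        intro hxe
        induction e with
        | h a b =>
          rcases Sym2.mem_iff.1 hxe with rfl | rfl
          · exact hq.2 (q.fst_mem_support_of_mem_edges he)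
          · exact hq.2 (q.snd_mem_support_of_mem_edges he)
      ⟨⟨_, h⟩, q.transfer G' hedges, hq.1.transfer hedges⟩

lemma firstStep_injective {V : Type*} {G : SimpleGraph V} {x y : V} (hxy : x ≠ y)
    (G' : SimpleGraph V) (hle : G' ≤ G) (hG' : ∀ e ∈ G.edgeSet, x ∉ e → e ∈ G'.edgeSet) :
    Function.Injective (fun p : {p : G.Walk x y // p.IsPath} =>
      firstStep hxy G' hG' p.1 p.2) := by
  rintro ⟨p, hp⟩ ⟨p', hp'⟩ heq
  cases p with
  | nil => exact absurd rfl hxy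
  | @cons _ z _ h q =>
    cases p' with
    | nil => exact absurd rfl hxy
    | @cons _ z' _ h' q' =>
      simp only [firstStep] at heq
      have hz : z = z' := congrArg (fun s => (s.1 : V)) heq
      subst hz
      injection heq with h1 h2
      have h2' := h2
      have hq : q = q' := by
        have h2 := congrArg
          (fun w : {q : G'.Walk z y // q.IsPath} => w.1.transfer G
            (fun e he => (SimpleGraph.edgeSet_subset_edgeSet.2 hle) (w.1.edges_subset_edgeSet he)))
          h2'
        simpa [SimpleGraph.Walk.transfer_transfer, SimpleGraph.Walk.transfer_self] using h2
      subst hq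
      rfl

lemma pathCnt_self {V : Type*} (G : SimpleGraph V) (x : V) : pathCnt G x x = 1 := by
  haveI : Unique {p : G.Walk x x // p.IsPath} := by
    refine ⟨⟨⟨SimpleGraph.Walk.nil, SimpleGraph.Walk.IsPath.nil⟩⟩, ?_⟩
    rintro ⟨p, hp⟩
    exact Subtype.ext ((SimpleGraph.Walk.isPath_iff_eq_nil (p := p)).1 hp)
  exact Nat.card_unique

lemma key_induction (m : ℕ) : ∀ {V : Type*} [Fintype V] (G : SimpleGraph V) (x y : V),
    edgeCnt G = m → pathCnt G x y ≤ sSup (pSet m) := by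
  induction m using Nat.strong_induction_on with
  | _ m IH =>
    intro V _ G x y hm
    classical
    rcases eq_or_ne x y with rfl | hxy
    · rw [pathCnt_self]
      exact le_csSup (pSet_bddAbove m) (one_mem_pSet m)
    · set G' := G.deleteEdges (G.incidenceSet x) with hG'def
      have hle : G' ≤ G := SimpleGraph.deleteEdges_le _
      have hG'mem : ∀ e ∈ G.edgeSet, x ∉ e → e ∈ G'.edgeSet := by
        intro e he hx
        rw [SimpleGraph.edgeSet_deleteEdges]
        exact ⟨he, fun h => hx h.2⟩
      set d := G.degree x with hd
      -- degree ≤ m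
      have hdm : d ≤ m := by
        rw [← hm, edgeCnt, hd, ← SimpleGraph.card_incidenceSet_eq_degree,
          ← Nat.card_eq_fintype_card]
        exact Nat.card_mono (Set.toFinite _) (G.incidenceSet_subset x)
      -- edge count of G'
      have hinc : (G.incidenceSet x).ncard = d := by
        rw [Set.ncard_eq_toFinset_card', Set.toFinset_card,
          SimpleGraph.card_incidenceSet_eq_degree]
      have hedm : (G.edgeSet).ncard = m := by
        rw [← hm, edgeCnt, Nat.card_coe_set_eq]
      have hG'm : edgeCnt G' = m - d := by
        rw [edgeCnt, Nat.card_coe_set_eq, hG'def, SimpleGraph.edgeSet_deleteEdges,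
          Set.ncard_diff (G.incidenceSet_subset x) (Set.toFinite _), hinc, hedm]
      -- the counting bound
      have hcount : pathCnt G x y ≤
          ∑ z : G.neighborSet x, pathCnt G' z y := by
        have hinj := firstStep_injective hxy G' hle hG'mem
        calc pathCnt G x y
            ≤ Nat.card (Σ z : G.neighborSet x, {q : G'.Walk (z : V) y // q.IsPath}) :=
              Nat.card_le_card_of_injective _ hinj
          _ = ∑ z : G.neighborSet x, pathCnt G' z y := by
              rw [Nat.card_eq_fintype_card, Fintype.card_sigma]
              exact Finset.sum_congr rfl fun z _ => (Nat.card_eq_fintype_card).symm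
      rcases Nat.eq_zero_or_pos d with hd0 | hdpos
      · have hempty : IsEmpty (G.neighborSet x) := by
          rw [← Fintype.card_eq_zero_iff, SimpleGraph.card_neighborSet_eq_degree, ← hd, hd0]
        rw [Finset.univ_eq_empty, Finset.sum_empty] at hcount
        exact hcount.trans (Nat.zero_le _)
      · have hlt : m - d < m := Nat.sub_lt (lt_of_lt_of_le hdpos hdm) hdpos
        set K := sSup (pSet (m - d)) with hK
        have hKmem : K ∈ pSet (m - d) :=
          Nat.sSup_mem ⟨1, one_mem_pSet _⟩ (pSet_bddAbove _)
        have hsum_le : ∑ z : G.neighborSet x, pathCnt G' z y ≤ d * K := by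
          calc ∑ z : G.neighborSet x, pathCnt G' z y
              ≤ ∑ _z : G.neighborSet x, K :=
                Finset.sum_le_sum fun z _ => IH _ hlt G' z y hG'm
            _ = d * K := by
                rw [Finset.sum_const, smul_eq_mul, Finset.card_univ,
                  SimpleGraph.card_neighborSet_eq_degree]
        refine (hcount.trans hsum_le).trans (le_csSup (pSet_bddAbove m) ?_)
        obtain ⟨ℓ, e, hpos, hsume, hprode⟩ := hKmem
        refine ⟨ℓ + 1, fun i => if i = 0 then d else e (i - 1), ?_, ?_, ?_⟩
        · intro i hi
          rcases Nat.eq_zero_or_pos i with rfl | hi0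
          · simpa using hdpos
          · simp only [Nat.pos_iff_ne_zero.1 hi0, if_neg (Nat.pos_iff_ne_zero.1 hi0)]
            exact hpos _ (by omega)
        · have h1 : ∀ i, (if i + 1 = 0 then d else e (i + 1 - 1)) = e i := fun i => by simp
          rw [Finset.sum_range_succ', Finset.sum_congr rfl fun i _ => h1 i, if_pos rfl]
          exact le_trans (Nat.add_le_add_right hsume d) (by omega)
        · have h1 : ∀ i, (if i + 1 = 0 then d else e (i + 1 - 1)) = e i := fun i => by simp
          rw [Finset.prod_range_succ', Finset.prod_congr rfl fun i _ => h1 i, if_pos rfl,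
            ← hprode, mul_comm]

/-- If `G` has `m` edges then `p_{x,y}(G)` is at most the maximum of `∏ dᵢ` over
sequences of positive integers with `∑ dᵢ ≤ m`; in particular `p_{x,y}(G) ≤ e^{m/e}`. -/
theorem stmt10 {V : Type*} [Fintype V] (G : SimpleGraph V) (m : ℕ)
    (hm : edgeCnt G = m) (x y : V) :
    pathCnt G x y ≤
        sSup {P | ∃ (ℓ : ℕ) (d : ℕ → ℕ), (∀ i < ℓ, 0 < d i) ∧
          (∑ i ∈ Finset.range ℓ, d i ≤ m) ∧ P = ∏ i ∈ Finset.range ℓ, d i} ∧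
      (pathCnt G x y : ℝ) ≤ Real.exp (m / Real.exp 1) := by
  have h1 : pathCnt G x y ≤ sSup (pSet m) := key_induction m G x y hm
  refine ⟨h1, ?_⟩
  calc (pathCnt G x y : ℝ) ≤ ((sSup (pSet m) : ℕ) : ℝ) := by exact_mod_cast h1
    _ ≤ Real.exp (m / Real.exp 1) := sSup_pSet_real_bound m
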